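/- (Proposition 3.3, integrability condition.) Assume the Mecke identity with Papangelou intensity r, and assume: a : X×X → [0,∞) is measurable, symmetric (a(x,y) = a(y,x)), bounded, with sup_{x∈X} ∫_X a(x,y) ν(dy) < ∞; j : X → [0,∞) is measurable with r(x,γ) ≤ j(x) for all x ∈ X and γ ∈ Γ, with ∫_Λ j dν < ∞ for every Λ ∈ B₀(X), and sup_{x ∈ X\Λ₀} j(x) < ∞ for some Λ₀ ∈ B₀(X). For s ∈ [0,1] define c_s(x,y,γ) := a(x,y)·r(x,γ)^{s−1}·r(y,γ)^{s}·𝟙{r(x,γ)>0 and r(y,γ)>0}. Then for every s ∈ [0,1] and every Λ ∈ B₀(X), ∫_Γ ∑_{x∈γ} ∫_X c_s(x,y,γ\{x})·(χ_Λ(x)+χ_Λ(y)) ν(dy) μ(dγ) < ∞. -/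

import Mathlib

open MeasureTheory Set ENNReal Filter Topology

noncomputable section

/-- The configuration space over `X`: the set of all locally finite subsets of `X`. -/
def Config (X : Type*) [TopologicalSpace X] : Type _ :=
  {γ : Set X // ∀ K : Set X, IsCompact K → (γ ∩ K).Finite}

namespace Config

variable {X : Type*} [TopologicalSpace X]

/-- Removal of a point from a configuration, `γ \ {x}`. -/
def erase (γ : Config X) (x : X) : Config X :=
  ⟨γ.1 \ {x}, fun K hK => (γ.2 K hK).subset fun _ hz => ⟨hz.1.1, hz.2⟩⟩

/-- Insertion of a point into a configuration, `γ ∪ {x}`. -/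
def ins (γ : Config X) (x : X) : Config X :=
  ⟨insert x γ.1, fun K hK => ((γ.2 K hK).insert x).subset (by
    rintro z ⟨hz1, hz2⟩
    rcases Set.mem_insert_iff.mp hz1 with rfl | h
    · exact Set.mem_insert _ _
    · exact Set.mem_insert_of_mem _ ⟨h, hz2⟩)⟩

end Config

variable {X : Type*} [TopologicalSpace X]

/-- Cylinder functions `FC_b`: `F(γ) = g(⟨φ₁,γ⟩, …, ⟨φ_N,γ⟩)` with the `φᵢ` continuous
with compact support and `g` bounded continuous; here `⟨φ,γ⟩ = ∑_{x∈γ} φ(x)`. -/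
def IsCylinder (F : Config X → ℝ) : Prop :=
  ∃ (N : ℕ) (φ : Fin N → X → ℝ) (g : (Fin N → ℝ) → ℝ),
    (∀ i, Continuous (φ i)) ∧ (∀ i, HasCompactSupport (φ i)) ∧
      Continuous g ∧ (∃ C : ℝ, ∀ v, |g v| ≤ C) ∧
      ∀ γ : Config X, F γ = g fun i => ∑' x : γ.1, φ i x

/-- `(D_x^- F)(γ) = F(γ \ {x}) - F(γ)`. -/
def Dm (F : Config X → ℝ) (x : X) (γ : Config X) : ℝ := F (γ.erase x) - F γ

/-- `(D_x^+ F)(γ) = F(γ ∪ {x}) - F(γ)`. -/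
def Dp (F : Config X → ℝ) (x : X) (γ : Config X) : ℝ := F (γ.ins x) - F γ

/-- `(D_{xy}^{-+} F)(γ) = F((γ \ {x}) ∪ {y}) - F(γ)`. -/
def Dpm (F : Config X → ℝ) (x y : X) (γ : Config X) : ℝ := F ((γ.erase x).ins y) - F γ

variable [MeasurableSpace X]

/-- `Λ ∈ B₀(X)`: a relatively compact Borel set. -/
def IsB0 (Λ : Set X) : Prop := MeasurableSet Λ ∧ IsCompact (closure Λ)

/-- The σ-algebra on `Config X` generated by the counting maps `γ ↦ |γ ∩ Λ|`, `Λ ∈ B₀(X)`. -/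
instance : MeasurableSpace (Config X) :=
  ⨆ (Λ : Set X) (_ : IsB0 Λ),
    MeasurableSpace.comap (fun γ : Config X => (γ.1 ∩ Λ).ncard) ⊤

/-- The Mecke identity: `r` is a Papangelou intensity for `μ`, i.e.
`∫ ∑_{x∈γ} H(x,γ) μ(dγ) = ∫ ∫ r(x,γ) H(x,γ∪{x}) ν(dx) μ(dγ)` for measurable `H ≥ 0`. -/
def MeckeIdentity (ν : Measure X) (μ : Measure (Config X)) (r : X → Config X → ℝ) : Prop :=
  ∀ H : X → Config X → ℝ≥0∞, Measurable (fun p : X × Config X => H p.1 p.2) →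
    ∫⁻ γ, ∑' x : γ.1, H (x : X) γ ∂μ =
      ∫⁻ γ, ∫⁻ x, ENNReal.ofReal (r x γ) * H x (γ.ins x) ∂ν ∂μ

/-- Condition (G1): `∫ ∑_{x∈γ∩Λ} d(x,γ\{x}) μ(dγ) < ∞` for every `Λ ∈ B₀(X)`. -/
def CondG1 (μ : Measure (Config X)) (d : X → Config X → ℝ) : Prop :=
  ∀ Λ : Set X, IsB0 Λ →
    ∫⁻ γ, ∑' x : ↥(γ.1 ∩ Λ), ENNReal.ofReal (d (x : X) (γ.erase (x : X))) ∂μ < ⊤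

/-- Condition (K1): `∫ ∑_{x∈γ} ∫ c(x,y,γ\{x})(χ_Λ(x)+χ_Λ(y)) ν(dy) μ(dγ) < ∞`
for every `Λ ∈ B₀(X)`. -/
def CondK1 (ν : Measure X) (μ : Measure (Config X)) (c : X → X → Config X → ℝ) : Prop :=
  ∀ Λ : Set X, IsB0 Λ →
    ∫⁻ γ, ∑' x : γ.1, ∫⁻ y,
        ENNReal.ofReal (c (x : X) y (γ.erase (x : X))) *
          (Λ.indicator (1 : X → ℝ≥0∞) (x : X) + Λ.indicator (1 : X → ℝ≥0∞) y) ∂ν ∂μ < ⊤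

/-- The Glauber Dirichlet form `ℰ_G(F,G)`. -/
def glauberE (μ : Measure (Config X)) (d : X → Config X → ℝ) (F G : Config X → ℝ) : ℝ :=
  ∫ γ, (∑' x : γ.1, d (x : X) (γ.erase (x : X)) * Dm F (x : X) γ * Dm G (x : X) γ) ∂μ

/-- The Kawasaki Dirichlet form `ℰ_K(F,G)`. -/
def kawasakiE (ν : Measure X) (μ : Measure (Config X)) (c : X → X → Config X → ℝ)
    (F G : Config X → ℝ) : ℝ :=
  ∫ γ, (∑' x : γ.1, ∫ y, c (x : X) y (γ.erase (x : X)) * Dpm F (x : X) y γ *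
    Dpm G (x : X) y γ ∂ν) ∂μ

namespace MyAux

lemma finite_inter (γ : Config X) {Λ : Set X} (h : IsCompact (closure Λ)) :
    (γ.1 ∩ Λ).Finite :=
  (γ.2 _ h).subset (inter_subset_inter_right _ subset_closure)

lemma measurable_count {Λ : Set X} (h : IsB0 Λ) :
    Measurable fun γ : Config X => (γ.1 ∩ Λ).ncard := by
  have hle : MeasurableSpace.comap (fun γ : Config X => (γ.1 ∩ Λ).ncard) ⊤ ≤
      (inferInstance : MeasurableSpace (Config X)) :=
    le_iSup₂ (f := fun (Λ : Set X) (_ : IsB0 Λ) =>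
      MeasurableSpace.comap (fun γ : Config X => (γ.1 ∩ Λ).ncard) ⊤) Λ h
  exact fun t _ => hle _ ⟨t, trivial, rfl⟩

lemma measurable_into_config {α : Type*} [MeasurableSpace α] {g : α → Config X}
    (h : ∀ Λ : Set X, IsB0 Λ → Measurable fun a => (((g a).1 : Set X) ∩ Λ).ncard) :
    Measurable g := by
  rw [measurable_iff_comap_le]
  show MeasurableSpace.comap g (⨆ (Λ : Set X) (_ : IsB0 Λ),
    MeasurableSpace.comap (fun γ : Config X => (γ.1 ∩ Λ).ncard) ⊤) ≤ _
  simp only [MeasurableSpace.comap_iSup, MeasurableSpace.comap_comp]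
  refine iSup₂_le fun Λ hΛ => ?_
  rw [← measurable_iff_comap_le]
  exact h Λ hΛ

lemma isClosed_config [T2Space X] [LocallyCompactSpace X] (γ : Config X) :
    IsClosed γ.1 := by
  rw [← isOpen_compl_iff, isOpen_iff_mem_nhds]
  intro x hx
  obtain ⟨K, hK, hKn⟩ := exists_compact_mem_nhds x
  have hfin : (γ.1 ∩ K).Finite := γ.2 K hK
  have hcl : IsClosed (γ.1 ∩ K) := hfin.isClosed
  have : interior K \ (γ.1 ∩ K) ∈ nhds x := by
    refine Filter.inter_mem (interior_mem_nhds.mpr hKn) ?_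
    exact hcl.isOpen_compl.mem_nhds (fun h => hx h.1)
  refine Filter.mem_of_superset this ?_
  rintro z ⟨hz1, hz2⟩ hz3
  exact hz2 ⟨hz3, interior_subset hz1⟩

lemma measurableSet_mem [T2Space X] [LocallyCompactSpace X] [SecondCountableTopology X]
    [BorelSpace X] :
    MeasurableSet {p : X × Config X | p.1 ∈ p.2.1} := by
  obtain ⟨B, hBc, -, hB⟩ := TopologicalSpace.exists_countable_basis X
  set B' := {U ∈ B | IsCompact (closure U)} with hB'
  have hB'c : B'.Countable := hBc.mono (sep_subset _ _)
  have key : {p : X × Config X | p.1 ∈ p.2.1} =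
      ⋂ U ∈ B', {p : X × Config X | p.1 ∈ U → (p.2.1 ∩ U).Nonempty} := by
    ext ⟨x, γ⟩
    simp only [mem_setOf_eq, mem_iInter]
    constructor
    · exact fun hx U _ hxU => ⟨x, hx, hxU⟩
    · intro h
      by_contra hx
      obtain ⟨K, hK, hKn⟩ := exists_compact_mem_nhds x
      have hopen : IsOpen (γ.1ᶜ ∩ interior K) :=
        (isClosed_config γ).isOpen_compl.inter isOpen_interior
      have hxmem : x ∈ γ.1ᶜ ∩ interior K := ⟨hx, mem_interior_iff_mem_nhds.mpr hKn⟩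
      obtain ⟨U, hUB, hxU, hUsub⟩ := hB.exists_subset_of_mem_open hxmem hopen
      have hUB' : U ∈ B' := by
        refine ⟨hUB, ?_⟩
        refine hK.of_isClosed_subset isClosed_closure ?_
        calc closure U ⊆ closure (interior K) :=
              closure_mono (fun z hz => (hUsub hz).2)
          _ ⊆ K := closure_minimal interior_subset hK.isClosed
      obtain ⟨z, hz1, hz2⟩ := h U hUB' hxU
      exact (hUsub hz2).1 hz1
  rw [key]
  refine MeasurableSet.biInter hB'c fun U hU => ?_
  have hUopen : IsOpen U := hB.isOpen hU.1
  have : {p : X × Config X | p.1 ∈ U → (p.2.1 ∩ U).Nonempty} =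
      (Prod.fst ⁻¹' U)ᶜ ∪ Prod.snd ⁻¹' {γ : Config X | ((γ.1 : Set X) ∩ U).ncard ≠ 0} := by
    ext ⟨x, γ⟩
    simp only [mem_setOf_eq, mem_union, mem_compl_iff, mem_preimage]
    have hfin : (γ.1 ∩ U).Finite := finite_inter γ hU.2
    constructor
    · intro h
      by_cases hx : x ∈ U
      · right
        intro h0
        rw [Set.ncard_eq_zero hfin] at h0
        exact absurd (h hx) (by simp [h0])
      · exact Or.inl hx
    · rintro (h | h) hx
      · exact absurd hx h
      · rw [Set.nonempty_iff_ne_empty]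
        intro he
        exact h (by simp [he])
  rw [this]
  refine MeasurableSet.union ?_ ?_
  · exact (measurable_fst (hUopen.measurableSet)).compl
  · exact measurable_snd ((measurable_count ⟨hUopen.measurableSet, hU.2⟩)
      (measurableSet_singleton 0).compl)

lemma measurable_erase [T2Space X] [LocallyCompactSpace X] [SecondCountableTopology X]
    [BorelSpace X] :
    Measurable fun p : X × Config X => p.2.erase p.1 := by
  classical
  refine measurable_into_config fun Λ hΛ => ?_
  have heq : ∀ p : X × Config X, (((p.2.erase p.1).1 : Set X) ∩ Λ).ncard =
      if p.1 ∈ p.2.1 ∧ p.1 ∈ Λ then ((p.2.1 ∩ Λ).ncard - 1) else (p.2.1 ∩ Λ).ncard := by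
    rintro ⟨x, γ⟩
    show ((γ.1 \ {x}) ∩ Λ).ncard = _
    have : (γ.1 \ {x}) ∩ Λ = (γ.1 ∩ Λ) \ {x} := by
      ext z; simp [and_assoc, and_comm, and_left_comm]
    rw [this]
    by_cases hx : x ∈ γ.1 ∧ x ∈ Λ
    · rw [if_pos hx, Set.ncard_diff_singleton_of_mem (Set.mem_inter hx.1 hx.2)]
    · rw [if_neg hx, Set.diff_singleton_eq_self (fun h => hx ⟨h.1, h.2⟩)]
  simp only [heq]
  refine Measurable.ite ?_ ?_ ?_
  · exact MeasurableSet.inter measurableSet_mem (measurable_fst hΛ.1)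
  · exact ((measurable_count hΛ).comp measurable_snd).sub measurable_const
  · exact (measurable_count hΛ).comp measurable_snd



lemma countable_config [LocallyCompactSpace X] [SecondCountableTopology X] [T2Space X]
    (γ : Config X) : γ.1.Countable := by
  have : γ.1 = ⋃ n : ℕ, γ.1 ∩ compactCovering X n := by
    rw [← Set.inter_iUnion, iUnion_compactCovering, Set.inter_univ]
  rw [this]
  exact Set.countable_iUnion fun n => (γ.2 _ (isCompact_compactCovering X n)).countable

lemma rpow_le_one_add {t u : ℝ} (ht : 0 ≤ t) (hs0 : 0 ≤ u) (hs1 : u ≤ 1) :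
    t ^ u ≤ 1 + t := by
  rcases le_or_gt t 1 with h | h
  · calc t ^ u ≤ 1 := Real.rpow_le_one ht h hs0
    _ ≤ 1 + t := le_add_of_nonneg_right ht
  · calc t ^ u ≤ t ^ (1 : ℝ) := Real.rpow_le_rpow_of_exponent_le h.le hs1
    _ = t := Real.rpow_one t
    _ ≤ 1 + t := le_add_of_nonneg_left zero_le_one

end MyAux

open MyAux

/-- Proposition 3.3, integrability: for the rate
`c_s(x,y,γ) = a(x,y)·r(x,γ)^{s−1}·r(y,γ)^{s}·𝟙{r(x,γ)>0 ∧ r(y,γ)>0}`, `s ∈ [0,1]`,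
condition (K1) holds. -/
theorem example_rate_condK1 {X : Type*} [TopologicalSpace X]
    [LocallyCompactSpace X] [SecondCountableTopology X] [T2Space X]
    [MeasurableSpace X] [BorelSpace X]
    (ν : Measure X) [ν.Regular] [NullSingletonClass ν]
    (μ : Measure (Config X)) [IsProbabilityMeasure μ]
    (r : X → Config X → ℝ) (hr0 : ∀ x γ, 0 ≤ r x γ)
    (hrm : Measurable fun p : X × Config X => r p.1 p.2)
    (hMecke : MeckeIdentity ν μ r)
    (a : X → X → ℝ) (ha0 : ∀ x y, 0 ≤ a x y) (hasym : ∀ x y, a x y = a y x)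
    (ham : Measurable fun p : X × X => a p.1 p.2)
    (habdd : ∃ M : ℝ, ∀ x y, a x y ≤ M)
    (haint : ⨆ x, ∫⁻ y, ENNReal.ofReal (a x y) ∂ν < ⊤)
    (j : X → ℝ) (hj0 : ∀ x, 0 ≤ j x) (hjm : Measurable j)
    (hrj : ∀ x γ, r x γ ≤ j x)
    (hjint : ∀ Λ : Set X, IsB0 Λ → ∫⁻ x in Λ, ENNReal.ofReal (j x) ∂ν < ⊤)
    (hjbdd : ∃ Λ₀ : Set X, IsB0 Λ₀ ∧ ∃ M : ℝ, ∀ x ∉ Λ₀, j x ≤ M)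
    (s : ℝ) (hs : s ∈ Set.Icc (0 : ℝ) 1)
    (c : X → X → Config X → ℝ)
    (hc : ∀ x y γ, c x y γ =
      if 0 < r x γ ∧ 0 < r y γ then a x y * r x γ ^ (s - 1) * r y γ ^ s else 0) :
    CondK1 ν μ c := by
  intro Λ hΛ

  classical
  obtain ⟨M, hM⟩ := habdd
  obtain ⟨Λ₀, hΛ₀, M', hM'⟩ := hjbdd
  have hsf : SigmaFinite ν := by infer_instance
  set ind : X → ℝ≥0∞ := Λ.indicator (1 : X → ℝ≥0∞) with hind_def
  have hind_meas : Measurable ind := measurable_const.indicator hΛ.1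
  have hind_le : ∀ x, ind x ≤ 1 := by
    intro x; by_cases hx : x ∈ Λ <;> simp [ind, hx]
  set J : X → ℝ≥0∞ := fun x => ENNReal.ofReal (j x) with hJ_def
  have hJ_meas : Measurable J := hjm.ennreal_ofReal
  set A : X → X → ℝ≥0∞ := fun x y => ENNReal.ofReal (a x y) with hA_def
  have hA1 : ∀ x, Measurable fun y => A x y := fun x =>
    (Measurable.of_uncurry_left ham).ennreal_ofReal
  have hA2 : ∀ y, Measurable fun x => A x y := fun y =>
    (Measurable.of_uncurry_right ham).ennreal_ofReal
  have hAm : Measurable fun p : X × X => A p.1 p.2 := ham.ennreal_ofReal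
  set H : X → Config X → ℝ≥0∞ := fun x γ =>
    ∫⁻ y, ENNReal.ofReal (c x y (γ.erase x)) * (ind x + ind y) ∂ν with hH_def
  -- measurability of c as a function of (x, y, γ)
  have hc3 : Measurable fun q : (X × X) × Config X => c q.1.1 q.1.2 q.2 := by
    have hrw : (fun q : (X × X) × Config X => c q.1.1 q.1.2 q.2) = fun q =>
        if 0 < r q.1.1 q.2 ∧ 0 < r q.1.2 q.2 then
          a q.1.1 q.1.2 * r q.1.1 q.2 ^ (s - 1) * r q.1.2 q.2 ^ s else 0 :=
      funext fun q => hc q.1.1 q.1.2 q.2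
    rw [hrw]
    have hr1 : Measurable fun q : (X × X) × Config X => r q.1.1 q.2 :=
      hrm.comp ((measurable_fst.fst).prodMk measurable_snd)
    have hr2 : Measurable fun q : (X × X) × Config X => r q.1.2 q.2 :=
      hrm.comp ((measurable_fst.snd).prodMk measurable_snd)
    refine Measurable.ite ?_ ?_ measurable_const
    · exact (hr1 measurableSet_Ioi).inter (hr2 measurableSet_Ioi)
    · exact ((ham.comp measurable_fst).mul (hr1.pow measurable_const)).mul
        (hr2.pow measurable_const)
  have hHm : Measurable fun p : X × Config X => H p.1 p.2 := by
    refine Measurable.lintegral_prod_right' (f := fun q : (X × Config X) × X =>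
      ENNReal.ofReal (c q.1.1 q.2 (q.1.2.erase q.1.1)) * (ind q.1.1 + ind q.2)) ?_
    refine Measurable.mul ?_ ?_
    · have hmap : Measurable fun q : (X × Config X) × X =>
          ((q.1.1, q.2), q.1.2.erase q.1.1) :=
        ((measurable_fst.fst.prodMk measurable_snd).prodMk
          (measurable_erase.comp measurable_fst))
      have h' : Measurable fun q : (X × Config X) × X =>
          c q.1.1 q.2 (q.1.2.erase q.1.1) := hc3.comp hmap
      exact h'.ennreal_ofReal
    · exact (hind_meas.comp measurable_fst.fst).add (hind_meas.comp measurable_snd)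
  have hMeckeEq := hMecke H hHm
  show ∫⁻ γ, ∑' x : γ.1, H (x : X) γ ∂μ < ⊤
  rw [hMeckeEq]
  -- the dominating function
  set Φ : X → ℝ≥0∞ := fun x =>
    ∫⁻ y, (1 + J x) * (A x y * (1 + J y)) * (ind x + ind y) ∂ν with hΦ_def
  -- pointwise domination
  have hdom : ∀ γ : Config X, ∫⁻ x, ENNReal.ofReal (r x γ) * H x (γ.ins x) ∂ν ≤
      ∫⁻ x, Φ x ∂ν := by
    intro γ
    refine lintegral_mono_ae ?_
    have h0 : ν γ.1 = 0 := (countable_config γ).measure_zero ν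
    filter_upwards [measure_eq_zero_iff_ae_notMem.mp h0] with x hx
    have he : (γ.ins x).erase x = γ := by
      apply Subtype.ext
      show insert x γ.1 \ {x} = γ.1
      rw [Set.insert_diff_of_mem _ (Set.mem_singleton x), Set.diff_singleton_eq_self hx]
    have hH1 : H x (γ.ins x) = ∫⁻ y, ENNReal.ofReal (c x y γ) * (ind x + ind y) ∂ν := by
      rw [hH_def]; simp only [he]
    rw [hH1, ← lintegral_const_mul' _ _ ENNReal.ofReal_ne_top]
    refine lintegral_mono fun y => ?_
    rw [← mul_assoc]
    refine mul_le_mul_left ?_ _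
    have hkey : r x γ * c x y γ ≤ a x y * ((1 + j x) * (1 + j y)) := by
      rw [hc]
      by_cases h : 0 < r x γ ∧ 0 < r y γ
      · rw [if_pos h]
        have h1 : r x γ * (a x y * r x γ ^ (s - 1) * r y γ ^ s) =
            a x y * ((r x γ ^ (1:ℝ) * r x γ ^ (s - 1)) * r y γ ^ s) := by
          rw [Real.rpow_one]; ring
        rw [h1, ← Real.rpow_add h.1]
        have h2 : (1 : ℝ) + (s - 1) = s := by ring
        rw [h2]
        refine mul_le_mul_of_nonneg_left ?_ (ha0 x y)
        refine mul_le_mul ?_ ?_ (Real.rpow_nonneg (hr0 y γ) s) (by linarith [hj0 x])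
        · exact le_trans (rpow_le_one_add (hr0 x γ) hs.1 hs.2)
            (by linarith [hrj x γ])
        · exact le_trans (rpow_le_one_add (hr0 y γ) hs.1 hs.2)
            (by linarith [hrj y γ])
      · rw [if_neg h, mul_zero]
        exact mul_nonneg (ha0 x y)
          (mul_nonneg (by linarith [hj0 x]) (by linarith [hj0 y]))
    calc ENNReal.ofReal (r x γ) * ENNReal.ofReal (c x y γ)
        = ENNReal.ofReal (r x γ * c x y γ) := (ENNReal.ofReal_mul (hr0 x γ)).symm
      _ ≤ ENNReal.ofReal (a x y * ((1 + j x) * (1 + j y))) := ENNReal.ofReal_le_ofReal hkey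
      _ = (1 + J x) * (A x y * (1 + J y)) := by
          rw [ENNReal.ofReal_mul (ha0 x y), ENNReal.ofReal_mul (by linarith [hj0 x]),
            ENNReal.ofReal_add zero_le_one (hj0 x), ENNReal.ofReal_add zero_le_one (hj0 y),
            ENNReal.ofReal_one]
          ring
  -- constants
  set K : ℝ≥0∞ := ⨆ x, ∫⁻ y, A x y ∂ν with hK_def
  set C : ℝ≥0∞ := ENNReal.ofReal M * (ν Λ₀ + ∫⁻ y in Λ₀, J y ∂ν) + (1 + ENNReal.ofReal M') * K
    with hC_def
  have hνΛ₀ : ν Λ₀ < ⊤ := lt_of_le_of_lt (measure_mono subset_closure) hΛ₀.2.measure_lt_top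
  have hνΛ : ν Λ < ⊤ := lt_of_le_of_lt (measure_mono subset_closure) hΛ.2.measure_lt_top
  have hC : C < ⊤ := by
    rw [hC_def]
    refine ENNReal.add_lt_top.mpr ⟨?_, ?_⟩
    · exact ENNReal.mul_lt_top ENNReal.ofReal_lt_top
        (ENNReal.add_lt_top.mpr ⟨hνΛ₀, hjint Λ₀ hΛ₀⟩)
    · refine ENNReal.mul_lt_top ?_ ?_
      · exact ENNReal.add_lt_top.mpr ⟨one_lt_top, ENNReal.ofReal_lt_top⟩
      · rw [hK_def]; exact haint
  -- inner bound
  have hinner : ∀ x : X, ∫⁻ y, A x y * (1 + J y) ∂ν ≤ C := by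
    intro x
    rw [← lintegral_add_compl (fun y => A x y * (1 + J y)) hΛ₀.1, hC_def]
    refine add_le_add ?_ ?_
    · calc ∫⁻ y in Λ₀, A x y * (1 + J y) ∂ν
          ≤ ∫⁻ y in Λ₀, ENNReal.ofReal M * (1 + J y) ∂ν := by
            refine setLIntegral_mono (measurable_const.mul (measurable_const.add hJ_meas))
              fun y _ => mul_le_mul_left (ENNReal.ofReal_le_ofReal (hM x y)) _
        _ = ENNReal.ofReal M * ∫⁻ y in Λ₀, (1 + J y) ∂ν :=
            lintegral_const_mul' _ _ ENNReal.ofReal_ne_top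
        _ = ENNReal.ofReal M * (ν Λ₀ + ∫⁻ y in Λ₀, J y ∂ν) := by
            rw [lintegral_add_left measurable_const, setLIntegral_one]
    · calc ∫⁻ y in Λ₀ᶜ, A x y * (1 + J y) ∂ν
          ≤ ∫⁻ y in Λ₀ᶜ, A x y * (1 + ENNReal.ofReal M') ∂ν := by
            refine setLIntegral_mono ((hA1 x).mul measurable_const) fun y hy =>
              mul_le_mul_right (add_le_add_right (ENNReal.ofReal_le_ofReal (hM' y hy)) _) _
        _ = (∫⁻ y in Λ₀ᶜ, A x y ∂ν) * (1 + ENNReal.ofReal M') :=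
            lintegral_mul_const' _ _ (by
              exact ENNReal.add_ne_top.mpr ⟨one_ne_top, ENNReal.ofReal_ne_top⟩)
        _ = (1 + ENNReal.ofReal M') * ∫⁻ y in Λ₀ᶜ, A x y ∂ν := mul_comm _ _
        _ ≤ (1 + ENNReal.ofReal M') * ∫⁻ y, A x y ∂ν :=
            mul_le_mul_right (setLIntegral_le_lintegral _ _) _
        _ ≤ (1 + ENNReal.ofReal M') * K := by
            rw [hK_def]; exact mul_le_mul_right (le_iSup (fun x => ∫⁻ y, A x y ∂ν) x) _
  have hf1m : Measurable fun p : X × X =>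
      (1 + J p.1) * (A p.1 p.2 * (1 + J p.2)) * ind p.1 :=
    (((measurable_const.add (hJ_meas.comp measurable_fst)).mul
      (hAm.mul (measurable_const.add (hJ_meas.comp measurable_snd)))).mul
      (hind_meas.comp measurable_fst))
  have hf2m : Measurable fun p : X × X =>
      (1 + J p.1) * (A p.1 p.2 * (1 + J p.2)) * ind p.2 :=
    (((measurable_const.add (hJ_meas.comp measurable_fst)).mul
      (hAm.mul (measurable_const.add (hJ_meas.comp measurable_snd)))).mul
      (hind_meas.comp measurable_snd))
  have hΛJ : (ν Λ + ∫⁻ x in Λ, J x ∂ν) < ⊤ := ENNReal.add_lt_top.mpr ⟨hνΛ, hjint Λ hΛ⟩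
  have hne1 : ∀ x : X, ind x * (1 + J x) ≠ ⊤ := by
    intro x
    exact ENNReal.mul_ne_top (lt_of_le_of_lt (hind_le x) one_lt_top).ne
      (ENNReal.add_ne_top.mpr ⟨one_ne_top, ENNReal.ofReal_ne_top⟩)
  -- generic outer bound
  have houter : ∀ g : X → X → ℝ≥0∞, (∀ x, ∫⁻ y, g x y ∂ν ≤ C) →
      ∫⁻ x, (ind x * (1 + J x)) * ∫⁻ y, g x y ∂ν ∂ν ≤ (ν Λ + ∫⁻ x in Λ, J x ∂ν) * C := by
    intro g hg
    have heq : ∀ x : X, (ind x * (1 + J x)) * ∫⁻ y, g x y ∂ν =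
        Λ.indicator (fun x => (1 + J x) * ∫⁻ y, g x y ∂ν) x := by
      intro x
      by_cases hx : x ∈ Λ <;> simp [ind, hx, mul_assoc]
    calc ∫⁻ x, (ind x * (1 + J x)) * ∫⁻ y, g x y ∂ν ∂ν
        = ∫⁻ x in Λ, (1 + J x) * ∫⁻ y, g x y ∂ν ∂ν := by
          simp_rw [heq]; exact lintegral_indicator hΛ.1 _
      _ ≤ ∫⁻ x in Λ, (1 + J x) * C ∂ν := by
          refine setLIntegral_mono' hΛ.1 fun x _ => mul_le_mul_right (hg x) _
      _ = (∫⁻ x in Λ, (1 + J x) ∂ν) * C := lintegral_mul_const' _ _ hC.ne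
      _ = (ν Λ + ∫⁻ x in Λ, J x ∂ν) * C := by
          rw [lintegral_add_left measurable_const, setLIntegral_one]
  calc ∫⁻ γ, ∫⁻ x, ENNReal.ofReal (r x γ) * H x (γ.ins x) ∂ν ∂μ
      ≤ ∫⁻ _, (∫⁻ x, Φ x ∂ν) ∂μ := lintegral_mono fun γ => hdom γ
    _ = ∫⁻ x, Φ x ∂ν := by rw [lintegral_const, measure_univ, mul_one]
    _ < ⊤ := by
        have hx1 : Measurable fun x => ∫⁻ y,
            (1 + J x) * (A x y * (1 + J y)) * ind x ∂ν :=
          hf1m.lintegral_prod_right'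
        have hsplit : ∫⁻ x, Φ x ∂ν =
            (∫⁻ x, ∫⁻ y, (1 + J x) * (A x y * (1 + J y)) * ind x ∂ν ∂ν) +
            (∫⁻ x, ∫⁻ y, (1 + J x) * (A x y * (1 + J y)) * ind y ∂ν ∂ν) := by
          rw [← lintegral_add_left hx1]
          refine lintegral_congr fun x => ?_
          rw [hΦ_def]
          have hm1 : Measurable fun y => (1 + J x) * (A x y * (1 + J y)) * ind x :=
            ((measurable_const.mul ((hA1 x).mul (measurable_const.add hJ_meas))).mul
              measurable_const)
          rw [← lintegral_add_left hm1]
          exact lintegral_congr fun y => by ring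
        rw [hsplit]
        refine ENNReal.add_lt_top.mpr ⟨?_, ?_⟩
        · -- term 1
          have h1 : ∀ x, ∫⁻ y, (1 + J x) * (A x y * (1 + J y)) * ind x ∂ν =
              (ind x * (1 + J x)) * ∫⁻ y, A x y * (1 + J y) ∂ν := by
            intro x
            rw [← lintegral_const_mul' _ _ (hne1 x)]
            exact lintegral_congr fun y => by ring
          simp_rw [h1]
          exact lt_of_le_of_lt (houter _ hinner) (ENNReal.mul_lt_top hΛJ hC)
        · -- term 2
          have hswap : ∫⁻ x, ∫⁻ y, (1 + J x) * (A x y * (1 + J y)) * ind y ∂ν ∂ν =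
              ∫⁻ y, ∫⁻ x, (1 + J x) * (A x y * (1 + J y)) * ind y ∂ν ∂ν :=
            lintegral_lintegral_swap hf2m.aemeasurable
          rw [hswap]
          have h2 : ∀ y, ∫⁻ x, (1 + J x) * (A x y * (1 + J y)) * ind y ∂ν =
              (ind y * (1 + J y)) * ∫⁻ x, A y x * (1 + J x) ∂ν := by
            intro y
            rw [← lintegral_const_mul' _ _ (hne1 y)]
            refine lintegral_congr fun x => ?_
            have hsymA : A x y = A y x := by rw [hA_def]; simp only []; rw [hasym x y]
            rw [hsymA]
            ring
          simp_rw [h2]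
          exact lt_of_le_of_lt (houter _ (fun y => hinner y)) (ENNReal.mul_lt_top hΛJ hC)


end
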